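/- Let A, B ∈ ℝ and let F : ℝ → ℝ be twice differentiable with F''(z) = h(z) for all z and F(−1) = F(1) = 0. Then the boundary conditions F'(1) = −2·p_c(1) and F'(−1) = 2·p_c(−1) hold if and only if A·α₁ + B·α₀ = −2β₀ and A·α₂ + B·α₁ = −2β₁. In particular, there is exactly one pair (A,B) ∈ ℝ² for which the solution F of F'' = h, F(±1) = 0 also satisfies F'(±1) = ∓2·p_c(±1). -/

import Mathlib

open MeasureTheory

lemma pos_int_aux (f : ℝ → ℝ) (hc : Continuous f)
    (hnn : ∀ t ∈ Set.Ioc (-1:ℝ) 1, 0 ≤ f t) {t0 : ℝ}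
    (h1 : -1 < t0) (h2 : t0 < 1) (hpos : 0 < f t0) :
    0 < ∫ t in (-1:ℝ)..1, f t := by
  rw [intervalIntegral.integral_pos_iff_support_of_nonneg_ae'
      (by
        rw [Set.uIoc_of_le (by norm_num : (-1:ℝ) ≤ 1)]
        exact ae_restrict_of_forall_mem measurableSet_Ioc hnn)
      (hc.intervalIntegrable _ _)]
  refine ⟨by norm_num, ?_⟩
  have hs : IsOpen (Function.support f) := hc.isOpen_support
  obtain ⟨ε, hε, hball⟩ := Metric.isOpen_iff.mp hs t0
    (by simpa [Function.mem_support] using hpos.ne')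
  have huv : max (-1) (t0 - ε) < min 1 (t0 + ε) :=
    max_lt (lt_min (by norm_num) (by linarith)) (lt_min (by linarith) (by linarith))
  have hsub : Set.Ioo (max (-1) (t0 - ε)) (min 1 (t0 + ε)) ⊆
      Function.support f ∩ Set.Ioc (-1) 1 := by
    intro t ht
    obtain ⟨ht1, ht2⟩ := ht
    have hb1 : t0 - ε < t := lt_of_le_of_lt (le_max_right _ _) ht1
    have hb2 : t < t0 + ε := lt_of_lt_of_le ht2 (min_le_right _ _)
    refine ⟨hball ?_, lt_of_le_of_lt (le_max_left _ _) ht1,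
      le_of_lt (lt_of_lt_of_le ht2 (min_le_left _ _))⟩
    rw [Metric.mem_ball, Real.dist_eq, abs_lt]
    constructor <;> linarith
  calc (0:ENNReal) < volume (Set.Ioo (max (-1) (t0 - ε)) (min 1 (t0 + ε))) := by
        rw [Real.volume_Ioo]
        exact ENNReal.ofReal_pos.mpr (by linarith)
    _ ≤ _ := measure_mono hsub

set_option maxHeartbeats 2000000 in
theorem stmt1 {ι : Type*} [Fintype ι] [DecidableEq ι] [Nonempty ι]
    (x : ι → ℝ) (hx1 : ∀ a, |x a| ≤ 1) (hx0 : ∀ a, x a ≠ 0)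
    (d : ι → ℕ) (hd : ∀ a, 1 ≤ d a) (s : ι → ℝ)
    (pc : ℝ → ℝ) (hpc : ∀ t, pc t = ∏ a, (1 + x a * t) ^ d a)
    (α : ℕ → ℝ) (hα : ∀ r, α r = ∫ t in (-1:ℝ)..1, pc t * t ^ r)
    (β : ℕ → ℝ)
    (hβ : ∀ r, β r = pc 1 + (-1:ℝ) ^ r * pc (-1) +
      ∫ t in (-1:ℝ)..1, (∑ a, (d a : ℝ) * s a * x a * (1 + x a * t) ^ (d a - 1) *
        ∏ b ∈ Finset.univ.erase a, (1 + x b * t) ^ d b) * t ^ r)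
    (h : ℝ → ℝ → ℝ → ℝ)
    (hh : ∀ A B t, h A B t = (A * t + B) * pc t +
      ∑ a, 2 * (d a : ℝ) * s a * x a * (1 + x a * t) ^ (d a - 1) *
        ∏ b ∈ Finset.univ.erase a, (1 + x b * t) ^ d b) :
    (∀ (A B : ℝ) (F F' : ℝ → ℝ),
      (∀ z, HasDerivAt F (F' z) z) → (∀ z, HasDerivAt F' (h A B z) z) →
      F (-1) = 0 → F 1 = 0 →
      ((F' 1 = -2 * pc 1 ∧ F' (-1) = 2 * pc (-1)) ↔
        (A * α 1 + B * α 0 = -2 * β 0 ∧ A * α 2 + B * α 1 = -2 * β 1))) ∧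
    (∃! AB : ℝ × ℝ, ∀ F F' : ℝ → ℝ,
      (∀ z, HasDerivAt F (F' z) z) → (∀ z, HasDerivAt F' (h AB.1 AB.2 z) z) →
      F (-1) = 0 → F 1 = 0 →
      (F' 1 = -2 * pc 1 ∧ F' (-1) = 2 * pc (-1))) := by
  -- basic continuity facts
  have hpc' : pc = fun t => ∏ a, (1 + x a * t) ^ d a := funext hpc
  have cpc : Continuous pc := by
    rw [hpc']
    exact continuous_finset_prod _ fun a _ => by continuity
  set S : ℝ → ℝ := fun t => ∑ a, (d a : ℝ) * s a * x a * (1 + x a * t) ^ (d a - 1) *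
      ∏ b ∈ Finset.univ.erase a, (1 + x b * t) ^ d b with hS
  have cS : Continuous S := by
    apply continuous_finset_sum
    intro a _
    apply Continuous.mul
    · continuity
    · exact continuous_finset_prod _ fun b _ => by continuity
  have hhS : ∀ A B t, h A B t = (A * t + B) * pc t + 2 * S t := by
    intro A B t
    rw [hh, hS]
    simp only [Finset.mul_sum]
    congr 1
    exact Finset.sum_congr rfl fun a _ => by ring
  have ch : ∀ A B, Continuous (h A B) := by
    intro A B
    have : h A B = fun t => (A * t + B) * pc t + 2 * S t := funext (hhS A B)
    rw [this]
    exact (((continuous_const.mul continuous_id).add continuous_const).mul cpc).add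
      (continuous_const.mul cS)
  -- integrability
  have ipc : ∀ r : ℕ, IntervalIntegrable (fun t => pc t * t ^ r) volume (-1) 1 :=
    fun r => (cpc.mul (continuous_pow r)).intervalIntegrable _ _
  have iS : ∀ r : ℕ, IntervalIntegrable (fun t => S t * t ^ r) volume (-1) 1 :=
    fun r => (cS.mul (continuous_pow r)).intervalIntegrable _ _
  -- the key integral computation
  have hint : ∀ (A B : ℝ) (r : ℕ),
      (∫ t in (-1:ℝ)..1, h A B t * t ^ r) =
        A * α (r+1) + B * α r + 2 * (β r - pc 1 - (-1:ℝ) ^ r * pc (-1)) := by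
    intro A B r
    have hrw : Set.EqOn (fun t => h A B t * t ^ r)
        (fun t => (A * (pc t * t ^ (r+1)) + B * (pc t * t ^ r)) + 2 * (S t * t ^ r))
        (Set.uIcc (-1:ℝ) 1) := by
      intro t _
      simp only [hhS A B t]
      ring
    rw [intervalIntegral.integral_congr hrw,
      intervalIntegral.integral_add (((ipc (r+1)).const_mul A).add ((ipc r).const_mul B))
        ((iS r).const_mul 2),
      intervalIntegral.integral_add ((ipc (r+1)).const_mul A) ((ipc r).const_mul B),
      intervalIntegral.integral_const_mul, intervalIntegral.integral_const_mul,
      intervalIntegral.integral_const_mul, hα (r+1), hα r, hβ r]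
    ring
  -- Part 1
  have main : ∀ (A B : ℝ) (F F' : ℝ → ℝ),
      (∀ z, HasDerivAt F (F' z) z) → (∀ z, HasDerivAt F' (h A B z) z) →
      F (-1) = 0 → F 1 = 0 →
      ((F' 1 = -2 * pc 1 ∧ F' (-1) = 2 * pc (-1)) ↔
        (A * α 1 + B * α 0 = -2 * β 0 ∧ A * α 2 + B * α 1 = -2 * β 1)) := by
    intro A B F F' hF hF' hFm hFp
    have key1 : (∫ t in (-1:ℝ)..1, h A B t * t ^ 0) = F' 1 - F' (-1) := by
      apply intervalIntegral.integral_eq_sub_of_hasDerivAt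
      · intro t _
        simpa using hF' t
      · exact ((ch A B).mul (continuous_pow 0)).intervalIntegrable _ _
    have key2 : (∫ t in (-1:ℝ)..1, h A B t * t ^ 1) =
        (1 * F' 1 - F 1) - ((-1) * F' (-1) - F (-1)) := by
      apply intervalIntegral.integral_eq_sub_of_hasDerivAt (f := fun t => t * F' t - F t)
      · intro t _
        have := ((hasDerivAt_id t).mul (hF' t)).sub (hF t)
        convert this using 1
        · rfl
        simp only [id_eq]
        ring
      · exact ((ch A B).mul (continuous_pow 1)).intervalIntegrable _ _
    rw [hint A B 0] at key1
    rw [hint A B 1] at key2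
    norm_num at key1 key2
    rw [hFm, hFp] at key2
    constructor
    · rintro ⟨e1, e2⟩
      constructor <;> [skip; skip] <;> nlinarith [key1, key2]
    · rintro ⟨e1, e2⟩
      constructor <;> nlinarith [key1, key2]
  refine ⟨main, ?_⟩
  -- positivity facts
  have pcnn : ∀ t ∈ Set.Ioc (-1:ℝ) 1, 0 ≤ pc t := by
    intro t ht
    rw [hpc]
    apply Finset.prod_nonneg
    intro a _
    apply pow_nonneg
    obtain ⟨hxa, hxb⟩ := abs_le.mp (hx1 a)
    obtain ⟨ht1, ht2⟩ := ht
    nlinarith [mul_nonneg (by linarith : (0:ℝ) ≤ 1 + x a) (by linarith : (0:ℝ) ≤ 1 + t),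
      mul_nonneg (by linarith : (0:ℝ) ≤ 1 - x a) (by linarith : (0:ℝ) ≤ 1 - t)]
  have pc0 : pc 0 = 1 := by rw [hpc]; simp
  have pchalf : 0 < pc (1/2) := by
    rw [hpc]
    apply Finset.prod_pos
    intro a _
    apply pow_pos
    have := (abs_le.mp (hx1 a)).1
    nlinarith
  have hα2 : 0 < α 2 := by
    rw [hα 2]
    apply pos_int_aux _ (cpc.mul (continuous_pow 2))
      (fun t ht => mul_nonneg (pcnn t ht) (by positivity)) (t0 := 1/2)
      (by norm_num) (by norm_num)
    show 0 < pc (1/2) * (1/2:ℝ)^2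
    positivity
  have hα0 : 0 < α 0 := by
    rw [hα 0]
    apply pos_int_aux _ (cpc.mul (continuous_pow 0))
      (fun t ht => mul_nonneg (pcnn t ht) (by positivity)) (t0 := 0)
      (by norm_num) (by norm_num)
    simp [pc0]
  have hq : ∀ lam : ℝ, 0 < α 2 * (lam * lam) + (2 * α 1) * lam + α 0 := by
    intro lam
    have heq : α 2 * (lam * lam) + (2 * α 1) * lam + α 0 =
        ∫ t in (-1:ℝ)..1, (lam * t + 1) ^ 2 * pc t := by
      have hrw : Set.EqOn (fun t : ℝ => (lam * t + 1) ^ 2 * pc t)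
          (fun t => ((lam * lam) * (pc t * t ^ 2) + (2 * lam) * (pc t * t ^ 1)) +
            1 * (pc t * t ^ 0)) (Set.uIcc (-1:ℝ) 1) := by
        intro t _
        simp only
        ring
      rw [intervalIntegral.integral_congr hrw,
        intervalIntegral.integral_add (((ipc 2).const_mul _).add ((ipc 1).const_mul _))
          ((ipc 0).const_mul 1),
        intervalIntegral.integral_add ((ipc 2).const_mul _) ((ipc 1).const_mul _),
        intervalIntegral.integral_const_mul, intervalIntegral.integral_const_mul,
        intervalIntegral.integral_const_mul, hα 2, hα 1, hα 0]
      ring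
    rw [heq]
    apply pos_int_aux _ (by continuity)
      (fun t ht => mul_nonneg (by positivity) (pcnn t ht)) (t0 := 0)
      (by norm_num) (by norm_num)
    simp [pc0]
  have hdet : α 1 ^ 2 < α 0 * α 2 := by
    have := discrim_lt_zero (ne_of_gt hα2) hq
    rw [discrim] at this
    nlinarith
  -- unique solution of the linear system
  set D : ℝ := α 0 * α 2 - α 1 ^ 2 with hD
  have hDpos : 0 < D := by rw [hD]; linarith
  set A₀ : ℝ := 2 * (β 0 * α 1 - β 1 * α 0) / D with hA₀
  set B₀ : ℝ := 2 * (β 1 * α 1 - β 0 * α 2) / D with hB₀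
  have hne : α 0 * α 2 - α 1 ^ 2 ≠ 0 := ne_of_gt (by rw [hD] at hDpos; linarith)
  have hsys : A₀ * α 1 + B₀ * α 0 = -2 * β 0 ∧ A₀ * α 2 + B₀ * α 1 = -2 * β 1 := by
    constructor
    · rw [hA₀, hB₀, hD]
      field_simp
      ring
    · rw [hA₀, hB₀, hD]
      field_simp
      ring
  refine ⟨(A₀, B₀), ?_, ?_⟩
  · intro F F' hF hF' hFm hFp
    exact (main A₀ B₀ F F' hF hF' hFm hFp).mpr hsys
  · rintro ⟨A, B⟩ hAB
    -- construct a solution F of F'' = h A B with F(±1) = 0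
    set g : ℝ → ℝ := h A B with hg
    have cg : Continuous g := ch A B
    set G : ℝ → ℝ := fun t => ∫ u in (-1:ℝ)..t, g u with hGdef
    have hG : ∀ t, HasDerivAt G (g t) t := fun t =>
      (cg.integral_hasStrictDerivAt (-1) t).hasDerivAt
    have cG : Continuous G :=
      (Differentiable.continuous (fun t => (hG t).differentiableAt))
    set H : ℝ → ℝ := fun t => ∫ u in (-1:ℝ)..t, G u with hHdef
    have hHd : ∀ t, HasDerivAt H (G t) t := fun t =>
      (cG.integral_hasStrictDerivAt (-1) t).hasDerivAt
    set F : ℝ → ℝ := fun t => H t - H 1 / 2 * (t + 1) with hFdef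
    set F' : ℝ → ℝ := fun t => G t - H 1 / 2 with hF'def
    have hF : ∀ z, HasDerivAt F (F' z) z := by
      intro z
      have h1 := (hHd z).sub (((hasDerivAt_id z).add_const 1).const_mul (H 1 / 2))
      have : G z - H 1 / 2 * 1 = F' z := by rw [hF'def]; ring
      rw [this] at h1
      exact h1
    have hF'd : ∀ z, HasDerivAt F' (h A B z) z := fun z => (hG z).sub_const _
    have hFm : F (-1) = 0 := by
      show H (-1) - H 1 / 2 * (-1 + 1) = 0
      rw [show H (-1) = 0 from intervalIntegral.integral_same]
      ring
    have hFp : F 1 = 0 := by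
      show H 1 - H 1 / 2 * (1 + 1) = 0
      ring
    have hb := hAB F F' hF hF'd hFm hFp
    obtain ⟨e1, e2⟩ := (main A B F F' hF hF'd hFm hFp).mp hb
    obtain ⟨f1, f2⟩ := hsys
    have hu : (A - A₀) * D = 0 := by
      rw [hD]
      linear_combination α 0 * e2 - α 0 * f2 - α 1 * e1 + α 1 * f1
    have hA : A = A₀ := by
      rcases mul_eq_zero.mp hu with h' | h'
      · linarith
      · exact absurd h' (ne_of_gt hDpos)
    have hB : B = B₀ := by
      have : B * α 0 = B₀ * α 0 := by rw [hA] at e1; linarith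
      exact mul_right_cancel₀ (ne_of_gt hα0) this
    exact Prod.ext hA hB
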